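/- Suppose a monoid M satisfies x²y ≈ yx² and xyxzx ≈ x²yz. Let u be a word and x a letter with occ_x(u) = n ≥ 3, so u = u₁ x u₂ x u₃ ⋯ u_n x u_{n+1} with x not occurring in any u_i. Then M satisfies u ≈ x² u_x, where u_x = u₁u₂⋯u_{n+1} is u with all occurrences of x deleted. -/

import Mathlib

/-- In a monoid satisfying x²y ≈ yx² and xyxzx ≈ x²yz, any word u in which a letter x
occurs at least three times equals x² u_x, where u_x is u with all occurrences of x
deleted. -/
theorem stmt14 {X : Type*} [DecidableEq X] {M : Type*} [Monoid M]
    (h1 : ∀ x y : M, x * x * y = y * x * x)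
    (h2 : ∀ x y z : M, x * y * x * z * x = x * x * y * z)
    (u : List X) (x : X) (hx : 3 ≤ u.count x) :
    ∀ f : X → M,
      (u.map f).prod =
        f x * f x * ((u.filter (fun a => decide (a ≠ x))).map f).prod := by
  intro f
  set c := f x with hc
  -- tail versions of the identities
  have hc3 : c * c * c = c * c := by
    have := h2 c 1 1; simpa using this
  have hc2c : ∀ t : M, c * (c * (c * t)) = c * (c * t) := by
    intro t
    have := congrArg (· * t) hc3
    simpa [mul_assoc] using this
  have hcomm : ∀ w t : M, c * (c * (w * t)) = w * (c * (c * t)) := by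
    intro w t
    have := congrArg (· * t) (h1 c w)
    simpa [mul_assoc] using this
  have h2t : ∀ y z t : M,
      c * (y * (c * (z * (c * t)))) = c * (c * (y * (z * t))) := by
    intro y z t
    have := congrArg (· * t) (h2 c y z)
    simpa [mul_assoc] using this
  have habs : ∀ w t : M, c * (c * (w * (c * t))) = c * (c * (w * t)) := by
    intro w t
    calc c * (c * (w * (c * t))) = w * (c * (c * (c * t))) := hcomm w (c * t)
      _ = w * (c * (c * t)) := by rw [hc2c t]
      _ = c * (c * (w * t)) := (hcomm w t).symm
  -- L0 : c² · P(r) = c² · P(filter r)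
  have L0 : ∀ r : List X,
      c * (c * (r.map f).prod)
        = c * (c * ((r.filter (fun a => decide (a ≠ x))).map f).prod) := by
    intro r
    induction r with
    | nil => rfl
    | cons a r ih =>
      by_cases hax : a = x
      · have hf : (a :: r).filter (fun b => decide (b ≠ x)) =
            r.filter (fun b => decide (b ≠ x)) := by simp [hax]
        rw [hf, List.map_cons, List.prod_cons, hax, ← hc, hc2c, ih]
      · have hf : (a :: r).filter (fun b => decide (b ≠ x)) =
            a :: r.filter (fun b => decide (b ≠ x)) := by simp [hax]
        rw [hf, List.map_cons, List.prod_cons, List.map_cons, List.prod_cons,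
          hcomm (f a) ((r.map f).prod), ih,
          ← hcomm (f a) (((r.filter (fun b => decide (b ≠ x))).map f).prod)]
  -- A : one occurrence of x
  have A : ∀ r : List X, 1 ≤ r.count x → ∀ m k : M,
      c * (m * (c * (k * (r.map f).prod)))
        = c * (c * (m * (k * (r.map f).prod))) := by
    intro r
    induction r with
    | nil => simp
    | cons a r ih =>
      intro hcount m k
      rw [List.map_cons, List.prod_cons]
      by_cases hax : a = x
      · rw [hax, ← hc]
        set p := (r.map f).prod with hp
        calc c * (m * (c * (k * (c * p))))
            = c * (c * (m * (k * p))) := h2t m k p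
          _ = m * (c * (c * (k * p))) := hcomm m (k * p)
          _ = m * (k * (c * (c * p))) := by rw [hcomm k p]
          _ = m * (k * (c * (c * (c * p)))) := by rw [hc2c p]
          _ = m * (c * (c * (k * (c * p)))) := by rw [← hcomm k (c * p)]
          _ = c * (c * (m * (k * (c * p)))) := (hcomm m (k * (c * p))).symm
      · have hr : 1 ≤ r.count x := by
          rwa [List.count_cons_of_ne hax] at hcount
        rw [← mul_assoc k (f a) ((r.map f).prod)]
        exact ih hr m (k * f a)
  -- B : two occurrences of x
  have B : ∀ r : List X, 2 ≤ r.count x → ∀ m : M,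
      c * (m * (r.map f).prod) = c * (c * (m * (r.map f).prod)) := by
    intro r
    induction r with
    | nil => simp
    | cons a r ih =>
      intro hcount m
      rw [List.map_cons, List.prod_cons]
      by_cases hax : a = x
      · have hr : 1 ≤ r.count x := by
          rw [hax, List.count_cons_self] at hcount; omega
        rw [hax, ← hc]
        have hA := A r hr m 1
        simp only [one_mul] at hA
        exact hA.trans (habs m ((r.map f).prod)).symm
      · have hr : 2 ≤ r.count x := by
          rwa [List.count_cons_of_ne hax] at hcount
        rw [← mul_assoc m (f a) ((r.map f).prod)]
        exact ih hr (m * f a)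
  -- C : three occurrences of x
  have C : ∀ r : List X, 3 ≤ r.count x →
      (r.map f).prod = c * (c * (r.map f).prod) := by
    intro r
    induction r with
    | nil => simp
    | cons a r ih =>
      intro hcount
      rw [List.map_cons, List.prod_cons]
      by_cases hax : a = x
      · have hr : 2 ≤ r.count x := by
          rw [hax, List.count_cons_self] at hcount; omega
        rw [hax, ← hc]
        have hB := B r hr 1
        simp only [one_mul] at hB
        exact hB.trans (hc2c ((r.map f).prod)).symm
      · have hr : 3 ≤ r.count x := by
          rwa [List.count_cons_of_ne hax] at hcount
        conv_lhs => rw [ih hr]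
        exact (hcomm (f a) ((r.map f).prod)).symm
  rw [mul_assoc]
  exact (C u hx).trans (L0 u)
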